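/- (Conservativeness of SCI.) Let P_A, P_B, Q_A, Q_B be symmetric positive definite, C_A = P_A + Q_A, C_B = P_B + Q_B, and let P_{AB} satisfy [[P_A, P_{AB}],[P_{AB}ᵀ, P_B]] ⪰ 0. For ω ∈ (0,1) set B = B_SCI(ω) = (ω(P_A + ω Q_A)^{-1} + (1−ω)(P_B + (1−ω)Q_B)^{-1})^{-1}, K_A = ω B (P_A + ω Q_A)^{-1}, K_B = (1−ω) B (P_B + (1−ω)Q_B)^{-1}. Then K_A + K_B = I and K_A C_A K_Aᵀ + K_A P_{AB} K_Bᵀ + K_B P_{AB}ᵀ K_Aᵀ + K_B C_B K_Bᵀ ⪯ B. -/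

import Mathlib

open Matrix

private lemma posDef_smul' {n : ℕ} {M : Matrix (Fin n) (Fin n) ℝ} (hM : M.PosDef) {c : ℝ}
    (hc : 0 < c) : (c • M).PosDef := by
  refine ⟨?_, fun x hx => ?_⟩
  · have := hM.1
    unfold Matrix.IsHermitian at *
    rw [conjTranspose_smul, this]; norm_num
  · exact (hM.smul hc).2 hx

private lemma block_conj {n : ℕ} {P11 P12 P21 P22 : Matrix (Fin n) (Fin n) ℝ}
    (h : (fromBlocks P11 P12 P21 P22).PosSemidef) (X Y : Matrix (Fin n) (Fin n) ℝ) :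
    (X * P11 * Xᵀ + X * P12 * Yᵀ + Y * P21 * Xᵀ + Y * P22 * Yᵀ).PosSemidef := by
  have := h.mul_mul_conjTranspose_same (fromCols X Y)
  rw [fromCols_mul_fromBlocks, conjTranspose_fromCols_eq_fromRows_conjTranspose,
    fromCols_mul_fromRows] at this
  convert this using 1
  show _ = (X * P11 + Y * P21) * Xᵀ + (X * P12 + Y * P22) * Yᵀ
  noncomm_ring

theorem sci_stmt9 {n : ℕ} (PA PB QA QB PAB : Matrix (Fin n) (Fin n) ℝ)
    (hPA : PA.PosDef) (hPB : PB.PosDef) (hQA : QA.PosDef) (hQB : QB.PosDef)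
    (hPAB : (Matrix.fromBlocks PA PAB PABᵀ PB).PosSemidef)
    (ω : ℝ) (hω : ω ∈ Set.Ioo (0 : ℝ) 1) :
    let CA := PA + QA
    let CB := PB + QB
    let B := (ω • (PA + ω • QA)⁻¹ + (1 - ω) • (PB + (1 - ω) • QB)⁻¹)⁻¹
    let KA := ω • (B * (PA + ω • QA)⁻¹)
    let KB := (1 - ω) • (B * (PB + (1 - ω) • QB)⁻¹)
    KA + KB = 1 ∧
    (B - (KA * CA * KAᵀ + KA * PAB * KBᵀ + KB * PABᵀ * KAᵀ + KB * CB * KBᵀ)).PosSemidef := by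
  obtain ⟨hω0, hω1⟩ := hω
  have hω1' : 0 < 1 - ω := by linarith
  intro CA CB B KA KB
  have hSA : (PA + ω • QA).PosDef := hPA.add (posDef_smul' hQA hω0)
  have hSB : (PB + (1 - ω) • QB).PosDef := hPB.add (posDef_smul' hQB hω1')
  have hM : (ω • (PA + ω • QA)⁻¹ + (1 - ω) • (PB + (1 - ω) • QB)⁻¹).PosDef :=
    (posDef_smul' hSA.inv hω0).add (posDef_smul' hSB.inv hω1')
  have hB : B = (ω • (PA + ω • QA)⁻¹ + (1 - ω) • (PB + (1 - ω) • QB)⁻¹)⁻¹ := rfl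
  have hBM : B * (ω • (PA + ω • QA)⁻¹ + (1 - ω) • (PB + (1 - ω) • QB)⁻¹) = 1 := by
    rw [hB]; exact nonsing_inv_mul _ hM.det_pos.ne'.isUnit
  -- symmetry facts
  have hSAt : (PA + ω • QA)ᵀ = PA + ω • QA := hSA.1
  have hSBt : (PB + (1 - ω) • QB)ᵀ = PB + (1 - ω) • QB := hSB.1
  have hIAt : ((PA + ω • QA)⁻¹)ᵀ = (PA + ω • QA)⁻¹ := by
    rw [transpose_nonsing_inv, hSAt]
  have hIBt : ((PB + (1 - ω) • QB)⁻¹)ᵀ = (PB + (1 - ω) • QB)⁻¹ := by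
    rw [transpose_nonsing_inv, hSBt]
  have hBt : Bᵀ = B := by
    rw [hB, transpose_nonsing_inv, transpose_add, transpose_smul, transpose_smul, hIAt, hIBt]
  set GA := B * (PA + ω • QA)⁻¹ with hGA
  set GB := B * (PB + (1 - ω) • QB)⁻¹ with hGB
  have hKA : KA = ω • GA := rfl
  have hKB : KB = (1 - ω) • GB := rfl
  have hGAt : GAᵀ = (PA + ω • QA)⁻¹ * B := by rw [hGA, transpose_mul, hIAt, hBt]
  have hGBt : GBᵀ = (PB + (1 - ω) • QB)⁻¹ * B := by rw [hGB, transpose_mul, hIBt, hBt]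
  have hGASA : GA * (PA + ω • QA) = B := by
    rw [hGA, mul_assoc, nonsing_inv_mul _ hSA.det_pos.ne'.isUnit, mul_one]
  have hGBSB : GB * (PB + (1 - ω) • QB) = B := by
    rw [hGB, mul_assoc, nonsing_inv_mul _ hSB.det_pos.ne'.isUnit, mul_one]
  constructor
  · rw [hKA, hKB, hGA, hGB, ← mul_smul_comm, ← mul_smul_comm, ← mul_add, hBM]
  · set s := Real.sqrt (ω * (1 - ω)) with hs'
    have hs : s * s = ω * (1 - ω) := Real.mul_self_sqrt (by positivity)
    have hs2 : s ^ 2 = ω * (1 - ω) := by rw [sq]; exact hs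
    have e : ω • (B * ((PA + ω • QA)⁻¹ * B)) + (1 - ω) • (B * ((PB + (1 - ω) • QB)⁻¹ * B)) =
        B * (ω • (PA + ω • QA)⁻¹ + (1 - ω) • (PB + (1 - ω) • QB)⁻¹) * B := by
      simp only [mul_add, add_mul, mul_smul_comm, smul_mul_assoc, mul_assoc]
    have hBid : B = ω • (GA * (PA + ω • QA) * GAᵀ) + (1 - ω) • (GB * (PB + (1 - ω) • QB) * GBᵀ) := by
      rw [hGASA, hGBSB, hGAt, hGBt, e, hBM, one_mul]
    have key : B - (KA * CA * KAᵀ + KA * PAB * KBᵀ + KB * PABᵀ * KAᵀ + KB * CB * KBᵀ) =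
        (s • GA) * PA * (s • GA)ᵀ + (s • GA) * PAB * ((-s) • GB)ᵀ +
        ((-s) • GB) * PABᵀ * (s • GA)ᵀ + ((-s) • GB) * PB * ((-s) • GB)ᵀ := by
      have hCA : CA = PA + QA := rfl
      have hCB : CB = PB + QB := rfl
      have e1 : s • GA * PA * (s • GA)ᵀ = (ω * (1 - ω)) • (GA * PA * GAᵀ) := by
        simp only [transpose_neg, transpose_smul, smul_mul_assoc, mul_smul_comm, smul_smul, neg_smul, smul_neg,
          neg_neg, mul_neg, neg_mul, mul_add, add_mul, smul_add, mul_assoc]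
        rw [hs]
      have e2 : s • GA * PAB * ((-s) • GB)ᵀ = -((ω * (1 - ω)) • (GA * PAB * GBᵀ)) := by
        simp only [transpose_neg, transpose_smul, smul_mul_assoc, mul_smul_comm, smul_smul, neg_smul, smul_neg,
          neg_neg, mul_neg, neg_mul, mul_add, add_mul, smul_add, mul_assoc]
        rw [hs]
      have e3 : (-s) • GB * PABᵀ * (s • GA)ᵀ = -((ω * (1 - ω)) • (GB * PABᵀ * GAᵀ)) := by
        simp only [transpose_neg, transpose_smul, smul_mul_assoc, mul_smul_comm, smul_smul, neg_smul, smul_neg,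
          neg_neg, mul_neg, neg_mul, mul_add, add_mul, smul_add, mul_assoc]
        rw [hs]
      have e4 : (-s) • GB * PB * ((-s) • GB)ᵀ = (ω * (1 - ω)) • (GB * PB * GBᵀ) := by
        simp only [transpose_neg, transpose_smul, smul_mul_assoc, mul_smul_comm, smul_smul, neg_smul, smul_neg,
          neg_neg, mul_neg, neg_mul, mul_add, add_mul, smul_add, mul_assoc]
        rw [hs]
      rw [hCA, hCB, hKA, hKB, e1, e2, e3, e4]
      conv_lhs => rw [hBid]
      simp only [transpose_neg, transpose_smul, smul_mul_assoc, mul_smul_comm, smul_smul, neg_smul, smul_neg,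
          neg_neg, mul_neg, neg_mul, mul_add, add_mul, smul_add, mul_assoc]
      match_scalars <;> ring
    rw [key]
    exact block_conj hPAB (s • GA) ((-s) • GB)
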